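/- Triangle inequality for the subspace distance: for any κ-orthonormal m×r matrices T₁, T₂, T₃, one has Dist_κ(T₁,T₂) + Dist_κ(T₂,T₃) ≥ Dist_κ(T₁,T₃), i.e. (r − ‖T₁ᵀ K T₂‖_F²)^{1/2} + (r − ‖T₂ᵀ K T₃‖_F²)^{1/2} ≥ (r − ‖T₁ᵀ K T₃‖_F²)^{1/2}. -/

import Mathlib

open Matrix

/-- Frobenius norm of a real matrix. -/
noncomputable def frobNorm {α β : Type*} [Fintype α] [Fintype β] (M : Matrix α β ℝ) : ℝ :=
  Real.sqrt (∑ i, ∑ j, (M i j) ^ 2)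

/-- Subspace distance between two κ-orthonormal bases. -/
noncomputable def distK {m r : ℕ} (κ : Fin m → ℝ) (T₁ T₂ : Matrix (Fin m) (Fin r) ℝ) : ℝ :=
  Real.sqrt ((r : ℝ) - (frobNorm (T₁ᵀ * Matrix.diagonal κ * T₂)) ^ 2)

attribute [local instance] Matrix.frobeniusNormedAddCommGroup

lemma frob_sq {α β : Type*} [Fintype α] [Fintype β] (M : Matrix α β ℝ) :
    frobNorm M ^ 2 = ∑ i, ∑ j, (M i j) ^ 2 := by
  apply Real.sq_sqrt; positivity

lemma frob_sq_trace {α β : Type*} [Fintype α] [Fintype β] (M : Matrix α β ℝ) :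
    frobNorm M ^ 2 = trace (Mᵀ * M) := by
  rw [frob_sq, Matrix.trace]
  rw [Finset.sum_comm]
  refine Finset.sum_congr rfl fun j _ => ?_
  simp only [Matrix.diag_apply, Matrix.mul_apply, Matrix.transpose_apply, sq]

lemma frob_eq_norm {α β : Type*} [Fintype α] [Fintype β] (M : Matrix α β ℝ) :
    frobNorm M = ‖M‖ := by
  rw [Matrix.frobenius_norm_def, frobNorm, Real.sqrt_eq_rpow]
  congr 1
  refine Finset.sum_congr rfl fun i _ => Finset.sum_congr rfl fun j _ => ?_
  rw [Real.norm_eq_abs, Real.rpow_two]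
  exact (sq_abs _).symm

lemma frob_one (r : ℕ) : frobNorm (1 : Matrix (Fin r) (Fin r) ℝ) ^ 2 = (r : ℝ) := by
  rw [frob_sq]
  simp [Matrix.one_apply, Finset.sum_ite_eq]

lemma trace_proj {m r : ℕ} (A : Matrix (Fin m) (Fin r) ℝ) (hA : Aᵀ * A = 1) :
    trace (A * Aᵀ) = (r : ℝ) := by
  rw [Matrix.trace_mul_comm, hA, Matrix.trace_one]
  simp

lemma trace_proj_mul {m r : ℕ} (A B : Matrix (Fin m) (Fin r) ℝ) :
    trace ((A * Aᵀ) * (B * Bᵀ)) = frobNorm (Aᵀ * B) ^ 2 := by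
  rw [frob_sq_trace, Matrix.transpose_mul, Matrix.transpose_transpose]
  rw [← Matrix.mul_assoc, Matrix.trace_mul_comm]
  simp only [Matrix.mul_assoc]

lemma frob_transpose {α β : Type*} [Fintype α] [Fintype β] (M : Matrix α β ℝ) :
    frobNorm Mᵀ = frobNorm M := by
  rw [frob_eq_norm, frob_eq_norm]
  exact Matrix.frobenius_norm_transpose M

lemma key {m r : ℕ} (U V : Matrix (Fin m) (Fin r) ℝ) (hU : Uᵀ * U = 1) (hV : Vᵀ * V = 1) :
    Real.sqrt ((r : ℝ) - frobNorm (Uᵀ * V) ^ 2) = ‖U * Uᵀ - V * Vᵀ‖ / Real.sqrt 2 := by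
  have hfe : frobNorm (Vᵀ * U) = frobNorm (Uᵀ * V) := by
    rw [← frob_transpose (Uᵀ * V), Matrix.transpose_mul, Matrix.transpose_transpose]
  have hnorm : ‖U * Uᵀ - V * Vᵀ‖ ^ 2 = 2 * ((r : ℝ) - frobNorm (Uᵀ * V) ^ 2) := by
    rw [← frob_eq_norm, frob_sq_trace]
    have hsym : (U * Uᵀ - V * Vᵀ)ᵀ = U * Uᵀ - V * Vᵀ := by
      simp [Matrix.transpose_sub, Matrix.transpose_mul]
    rw [hsym, Matrix.sub_mul, Matrix.mul_sub, Matrix.mul_sub, Matrix.trace_sub,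
      Matrix.trace_sub, Matrix.trace_sub]
    have h11 : trace ((U * Uᵀ) * (U * Uᵀ)) = (r : ℝ) := by
      rw [trace_proj_mul, hU, frob_one]
    have h22 : trace ((V * Vᵀ) * (V * Vᵀ)) = (r : ℝ) := by
      rw [trace_proj_mul, hV, frob_one]
    have h12 := trace_proj_mul U V
    have h21 := trace_proj_mul V U
    rw [h11, h22, h12, h21, hfe]
    ring
  have h2 : (0:ℝ) < Real.sqrt 2 := Real.sqrt_pos.mpr (by norm_num)
  have : (r : ℝ) - frobNorm (Uᵀ * V) ^ 2 = (‖U * Uᵀ - V * Vᵀ‖ / Real.sqrt 2) ^ 2 := by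
    rw [div_pow, Real.sq_sqrt (by norm_num : (2:ℝ) ≥ 0), hnorm]
    ring
  rw [this, Real.sqrt_sq (by positivity)]

/-- Triangle inequality for the subspace distance. -/
theorem distK_triangle (m r : ℕ) (hm : 0 < m) (hr : 0 < r)
    (κ : Fin m → ℝ) (hκ : ∀ i, 0 < κ i)
    (T₁ T₂ T₃ : Matrix (Fin m) (Fin r) ℝ)
    (hT₁ : T₁ᵀ * Matrix.diagonal κ * T₁ = 1)
    (hT₂ : T₂ᵀ * Matrix.diagonal κ * T₂ = 1)
    (hT₃ : T₃ᵀ * Matrix.diagonal κ * T₃ = 1) :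
    distK κ T₁ T₃ ≤ distK κ T₁ T₂ + distK κ T₂ T₃ := by
  set s : Fin m → ℝ := fun i => Real.sqrt (κ i) with hs
  set S : Matrix (Fin m) (Fin m) ℝ := Matrix.diagonal s with hSdef
  have hSS : S * S = Matrix.diagonal κ := by
    rw [hSdef, Matrix.diagonal_mul_diagonal]
    have : (fun i => s i * s i) = κ := funext fun i => Real.mul_self_sqrt (hκ i).le
    rw [this]
  have hSt : Sᵀ = S := Matrix.diagonal_transpose s
  set U₁ := S * T₁ with hU₁def
  set U₂ := S * T₂ with hU₂def
  set U₃ := S * T₃ with hU₃def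
  have hprod : ∀ (A B : Matrix (Fin m) (Fin r) ℝ),
      (S * A)ᵀ * (S * B) = Aᵀ * Matrix.diagonal κ * B := by
    intro A B
    rw [Matrix.transpose_mul, hSt, Matrix.mul_assoc, ← Matrix.mul_assoc S S B, hSS,
      Matrix.mul_assoc]
  have hU₁ : U₁ᵀ * U₁ = 1 := by rw [hU₁def, hprod, hT₁]
  have hU₂ : U₂ᵀ * U₂ = 1 := by rw [hU₂def, hprod, hT₂]
  have hU₃ : U₃ᵀ * U₃ = 1 := by rw [hU₃def, hprod, hT₃]
  have e13 : distK κ T₁ T₃ = ‖U₁ * U₁ᵀ - U₃ * U₃ᵀ‖ / Real.sqrt 2 := by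
    rw [distK, ← hprod T₁ T₃, ← hU₁def, ← hU₃def]; exact key U₁ U₃ hU₁ hU₃
  have e12 : distK κ T₁ T₂ = ‖U₁ * U₁ᵀ - U₂ * U₂ᵀ‖ / Real.sqrt 2 := by
    rw [distK, ← hprod T₁ T₂, ← hU₁def, ← hU₂def]; exact key U₁ U₂ hU₁ hU₂
  have e23 : distK κ T₂ T₃ = ‖U₂ * U₂ᵀ - U₃ * U₃ᵀ‖ / Real.sqrt 2 := by
    rw [distK, ← hprod T₂ T₃, ← hU₂def, ← hU₃def]; exact key U₂ U₃ hU₂ hU₃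
  rw [e13, e12, e23, ← add_div]
  gcongr
  exact norm_sub_le_norm_sub_add_norm_sub _ _ _
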